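/- Let μ be a dominant integral coweight, let w ∈ W₀ be a minimal coset representative for μ, and set x_w := t_{−w(μ)}w. Then: (i) every minimal gallery from A to x_w(A) has exactly ⟨ρ, μ + w(μ)⟩ crossings that are positive for the dominant orientation (and in particular its dimension c⁺ + f⁺ equals ⟨ρ, μ + w(μ)⟩, since a gallery has no foldings); and (ii) ⟨ρ, μ + w(μ)⟩ equals the number of pairs (α, n) ∈ Φ⁺ × ℤ such that the hyperplane H_{α,n} separates the dominant Weyl chamber C from the alcove x_w(A). -/

import Mathlib

/-!
Common framework: a finite crystallographic reduced root system `Φ` inside the dual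
of a finite-dimensional real vector space `V`, with a choice of positive roots `Pos`,
simple roots `Delta`, coroots, and the finite Weyl group `W` (a subgroup of linear
automorphisms of `V` generated by the root reflections).  We also set up affine
hyperplanes, the fundamental alcove, separation counts, and alcove walks.
-/

open Module Finset

section BasicDefs

variable {V : Type*} [AddCommGroup V] [Module ℝ V]

/-- The affine transformation `t_ν u : v ↦ u(v) + ν`. -/
def affT (ν : V) (u : V ≃ₗ[ℝ] V) : V → V := fun v => u v + ν

/-- The affine hyperplane `H_{α,n} = {v : ⟨α, v⟩ = n}`. -/
def affHyp (α : Dual ℝ V) (n : ℤ) : Set V := {v | α v = (n : ℝ)}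

/-- `H_{α,n}` separates `S` and `T`: the affine functional `⟨α, ·⟩ - n` is strictly
positive everywhere on one of the two sets and strictly negative everywhere on the other. -/
def SepBy (α : Dual ℝ V) (n : ℤ) (S T : Set V) : Prop :=
  ((∀ v ∈ S, α v < (n : ℝ)) ∧ ∀ v ∈ T, (n : ℝ) < α v) ∨
  ((∀ v ∈ S, (n : ℝ) < α v) ∧ ∀ v ∈ T, α v < (n : ℝ))

/-- The contragredient action of `w` on `V*`:  `(w · α)(v) = α (w⁻¹ v)`. -/
def dAct (w : V ≃ₗ[ℝ] V) (α : Dual ℝ V) : Dual ℝ V := α.comp w.symm.toLinearMap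

end BasicDefs

/-- A finite crystallographic reduced root system spanning the dual of `V`, together
with a system of positive roots, the simple roots, the coroots and the Weyl group. -/
structure RootSystemCtx (V : Type*) [AddCommGroup V] [Module ℝ V]
    [FiniteDimensional ℝ V] where
  Φ : Finset (Dual ℝ V)
  Pos : Finset (Dual ℝ V)
  Delta : Finset (Dual ℝ V)
  coroot : Dual ℝ V → V
  W : Subgroup (V ≃ₗ[ℝ] V)
  pos_subset : Pos ⊆ Φ
  delta_subset : Delta ⊆ Pos
  root_ne_zero : ∀ α ∈ Φ, α ≠ 0
  span_eq_top : Submodule.span ℝ (Φ : Set (Dual ℝ V)) = ⊤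
  pos_partition : ∀ α ∈ Φ, (α ∈ Pos ∧ -α ∉ Pos) ∨ (-α ∈ Pos ∧ α ∉ Pos)
  coroot_self : ∀ α ∈ Φ, α (coroot α) = 2
  crystallographic : ∀ α ∈ Φ, ∀ β ∈ Φ, ∃ n : ℤ, β (coroot α) = (n : ℝ)
  reduced : ∀ α ∈ Φ, ∀ c : ℝ, c • α ∈ Φ → c = 1 ∨ c = -1
  root_reflect_mem : ∀ α ∈ Φ, ∀ β ∈ Φ, β - β (coroot α) • α ∈ Φ
  delta_indep : LinearIndependent ℝ (fun x : {a : Dual ℝ V // a ∈ Delta} => x.1)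
  pos_of_delta : ∀ α ∈ Pos, ∃ c : Dual ℝ V → ℕ, α = ∑ β ∈ Delta, (c β : ℝ) • β
  W_gen : W = Subgroup.closure
    {g : V ≃ₗ[ℝ] V | ∃ α ∈ Φ, ∀ v : V, g v = v - α v • coroot α}

namespace RootSystemCtx

variable {V : Type*} [AddCommGroup V] [Module ℝ V] [FiniteDimensional ℝ V]

section CtxDefs

variable (C : RootSystemCtx V)

/-- `ρ`, the half sum of the positive roots. -/
noncomputable def rho : Dual ℝ V := (2⁻¹ : ℝ) • ∑ α ∈ C.Pos, α

open Classical in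
/-- The inversion set `{α ∈ Φ⁺ : w(α) ∈ -Φ⁺}` of `w`. -/
noncomputable def invSet (w : V ≃ₗ[ℝ] V) : Finset (Dual ℝ V) :=
  C.Pos.filter fun α => -(dAct w α) ∈ C.Pos

/-- The length `ℓ(w) = #{α ∈ Φ⁺ : w(α) ∈ -Φ⁺}`. -/
noncomputable def len (w : V ≃ₗ[ℝ] V) : ℕ := (C.invSet w).card

/-- `lam` is an integral coweight: `⟨α, lam⟩ ∈ ℤ` for all roots `α`. -/
def IsIntegral (lam : V) : Prop := ∀ α ∈ C.Φ, ∃ n : ℤ, α lam = (n : ℝ)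

/-- `lam` is dominant: `⟨α, lam⟩ ≥ 0` for all positive roots `α`. -/
def IsDominant (lam : V) : Prop := ∀ α ∈ C.Pos, 0 ≤ α lam

/-- `w` is a minimal(-length) coset representative for `lam`, i.e. `w ∈ W₀` and
`ℓ(w) ≤ ℓ(v)` for every `v ∈ w W_{0,lam}`. -/
def IsMinRep (w : V ≃ₗ[ℝ] V) (lam : V) : Prop :=
  w ∈ C.W ∧ ∀ u ∈ C.W, u lam = lam → C.len w ≤ C.len (w * u)

/-- The (open) fundamental alcove `A`. -/
def alcove : Set V := {v | ∀ α ∈ C.Pos, 0 < α v ∧ α v < 1}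

/-- The closure of the fundamental alcove. -/
def closedAlcove : Set V := {v | ∀ α ∈ C.Pos, 0 ≤ α v ∧ α v ≤ 1}

/-- The open dominant Weyl chamber `C`. -/
def chamber : Set V := {v | ∀ α ∈ C.Pos, 0 < α v}

/-- The number of affine hyperplanes `H_{α,n}` (`α ∈ Φ⁺`, `n ∈ ℤ`) separating `S` and `T`. -/
noncomputable def sepCount (S T : Set V) : ℕ :=
  Set.ncard {p : Dual ℝ V × ℤ | p.1 ∈ C.Pos ∧ SepBy p.1 p.2 S T}

/-- The length of an affine transformation: the number of affine hyperplanes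
separating `A` and `f(A)`. -/
noncomputable def affLen (f : V → V) : ℕ := C.sepCount C.alcove (f '' C.alcove)

/-- The coroot lattice `Q^∨`. -/
def Qv : AddSubgroup V := AddSubgroup.closure (C.coroot '' (C.Φ : Set (Dual ℝ V)))

/-- `b` is an alcove: a transform of the fundamental alcove under the affine Weyl
group `Q^∨ ⋊ W₀`. -/
def IsAlcoveSet (b : Set V) : Prop := ∃ ν ∈ C.Qv, ∃ u ∈ C.W, b = affT ν u '' C.alcove

/-- The affine reflection through the hyperplane `H_{α,n}`. -/
def reflH (α : Dual ℝ V) (n : ℤ) : V → V := fun v => v - (α v - (n : ℝ)) • C.coroot α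

/-- `H_{α,n}` (with `α ∈ Φ⁺`) supports a codimension-one face of the alcove `b`:
it is the unique affine hyperplane separating `b` from its reflection through `H_{α,n}`. -/
def IsWall (α : Dual ℝ V) (n : ℤ) (b : Set V) : Prop :=
  α ∈ C.Pos ∧ SepBy α n b (C.reflH α n '' b) ∧
    ∀ β ∈ C.Pos, ∀ m : ℤ, SepBy β m b (C.reflH α n '' b) → β = α ∧ m = n

open Classical in
/-- `Φ_M = Φ ∩ ℤΔ_M`, the roots of the Levi attached to `Δ_M ⊆ Δ`. -/
noncomputable def PhiM (ΔM : Finset (Dual ℝ V)) : Finset (Dual ℝ V) :=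
  C.Φ.filter fun α => α ∈ Submodule.span ℤ (ΔM : Set (Dual ℝ V))

/-- `W_{0,M}`, the subgroup of `W₀` generated by the reflections in the roots of `Φ_M`. -/
def WM (ΔM : Finset (Dual ℝ V)) : Subgroup (V ≃ₗ[ℝ] V) :=
  Subgroup.closure {g : V ≃ₗ[ℝ] V | ∃ α ∈ C.PhiM ΔM, ∀ v : V, g v = v - α v • C.coroot α}

/-- `lam` is `M`-dominant: `⟨β, lam⟩ ≥ 0` for every `β ∈ Φ_M⁺ = Φ_M ∩ Φ⁺`. -/
def IsMDominant (ΔM : Finset (Dual ℝ V)) (lam : V) : Prop :=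
  ∀ β, β ∈ C.PhiM ΔM → β ∈ C.Pos → 0 ≤ β lam

end CtxDefs

/-- An alcove walk of length `len`, starting at the fundamental alcove: at each step
`i < len` we are given a wall `H_{root i, lev i}` of the alcove `alc i`, and
`alc (i+1)` is either `alc i` (a folding) or its reflection through that wall (a crossing). -/
structure Walk (C : RootSystemCtx V) where
  len : ℕ
  alc : ℕ → Set V
  root : ℕ → Dual ℝ V
  lev : ℕ → ℤ
  start : alc 0 = C.alcove
  isAlcove : ∀ i ≤ len, C.IsAlcoveSet (alc i)
  wall : ∀ i < len, C.IsWall (root i) (lev i) (alc i)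
  step : ∀ i < len, alc (i + 1) = alc i ∨ alc (i + 1) = C.reflH (root i) (lev i) '' alc i

namespace Walk

variable {C : RootSystemCtx V}

/-- Step `i` is a folding. -/
def IsFolding (Wk : Walk C) (i : ℕ) : Prop := Wk.alc (i + 1) = Wk.alc i

/-- Step `i` is a crossing. -/
def IsCrossing (Wk : Walk C) (i : ℕ) : Prop := Wk.alc (i + 1) ≠ Wk.alc i

/-- The affine functional of step `i` is positive on the current alcove
(positivity for the dominant orientation). -/
def PosAt (Wk : Walk C) (i : ℕ) : Prop := ∀ v ∈ Wk.alc i, (Wk.lev i : ℝ) < Wk.root i v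

/-- The affine functional of step `i` is negative on the current alcove. -/
def NegAt (Wk : Walk C) (i : ℕ) : Prop := ∀ v ∈ Wk.alc i, Wk.root i v < (Wk.lev i : ℝ)

open Classical in
/-- `c⁺`: the number of crossings positive for the dominant orientation. -/
noncomputable def cPlus (Wk : Walk C) : ℕ :=
  ((Finset.range Wk.len).filter fun i => Wk.IsCrossing i ∧ Wk.PosAt i).card

open Classical in
/-- `f⁺`: the number of foldings. -/
noncomputable def fPlus (Wk : Walk C) : ℕ :=
  ((Finset.range Wk.len).filter fun i => Wk.IsFolding i).card

/-- Positively folded for the dominant orientation. -/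
def PosFolded (Wk : Walk C) : Prop := ∀ i < Wk.len, Wk.IsFolding i → Wk.NegAt i

/-- Positivity of step `i` for the parabolic orientation attached to the Levi root
set `ΦM`: for `α ∉ Φ_M` positivity on the current alcove; for `α ∈ Φ_M` the sign on
the current alcove agrees with the sign on the fundamental alcove. -/
def PosAtP (Wk : Walk C) (ΦM : Finset (Dual ℝ V)) (i : ℕ) : Prop :=
  (Wk.root i ∉ ΦM ∧ Wk.PosAt i) ∨
  (Wk.root i ∈ ΦM ∧
    ((Wk.PosAt i ∧ ∀ v ∈ C.alcove, (Wk.lev i : ℝ) < Wk.root i v) ∨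
     (Wk.NegAt i ∧ ∀ v ∈ C.alcove, Wk.root i v < (Wk.lev i : ℝ))))

/-- Negativity of step `i` for the parabolic orientation attached to `ΦM`. -/
def NegAtP (Wk : Walk C) (ΦM : Finset (Dual ℝ V)) (i : ℕ) : Prop :=
  (Wk.root i ∉ ΦM ∧ Wk.NegAt i) ∨
  (Wk.root i ∈ ΦM ∧
    ((Wk.PosAt i ∧ ∀ v ∈ C.alcove, Wk.root i v < (Wk.lev i : ℝ)) ∨
     (Wk.NegAt i ∧ ∀ v ∈ C.alcove, (Wk.lev i : ℝ) < Wk.root i v)))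

open Classical in
/-- `c⁺` for the parabolic orientation attached to `ΦM`. -/
noncomputable def cPlusP (Wk : Walk C) (ΦM : Finset (Dual ℝ V)) : ℕ :=
  ((Finset.range Wk.len).filter fun i => Wk.IsCrossing i ∧ Wk.PosAtP ΦM i).card

/-- Positively folded for the parabolic orientation attached to `ΦM`. -/
def PosFoldedP (Wk : Walk C) (ΦM : Finset (Dual ℝ V)) : Prop :=
  ∀ i < Wk.len, Wk.IsFolding i → Wk.NegAtP ΦM i

/-- A minimal gallery from the fundamental alcove to `b`: all steps are crossings,
it ends at `b`, and its length is the number of hyperplanes separating `A` and `b`. -/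
def IsMinGallery (Wk : Walk C) (b : Set V) : Prop :=
  (∀ i < Wk.len, Wk.IsCrossing i) ∧ Wk.alc Wk.len = b ∧
    Wk.len = C.sepCount C.alcove b

/-- Two walks have the same type: same length and, at each step, the pullbacks of the
crossed/folded hyperplanes to the fundamental alcove coincide. -/
def SameType (Wk G : Walk C) : Prop :=
  Wk.len = G.len ∧ ∀ i < Wk.len,
    ∃ ν₁ ∈ C.Qv, ∃ u₁ ∈ C.W, ∃ ν₂ ∈ C.Qv, ∃ u₂ ∈ C.W,
      Wk.alc i = affT ν₁ u₁ '' C.alcove ∧ G.alc i = affT ν₂ u₂ '' C.alcove ∧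
      affT ν₁ u₁ ⁻¹' affHyp (Wk.root i) (Wk.lev i) =
        affT ν₂ u₂ ⁻¹' affHyp (G.root i) (G.lev i)

/-- The walk terminates at `v₀`: `v₀` lies in the closure of the final alcove. -/
def Terminates (Wk : Walk C) (v₀ : V) : Prop :=
  ∃ ν ∈ C.Qv, ∃ u ∈ C.W, Wk.alc Wk.len = affT ν u '' C.alcove ∧
    v₀ ∈ affT ν u '' C.closedAlcove

/-- Two walks are equal as walks: same length and identical sequences of alcoves,
roots and levels. -/
def Equiv (Wk Wk' : Walk C) : Prop :=
  Wk.len = Wk'.len ∧ (∀ i ≤ Wk.len, Wk.alc i = Wk'.alc i) ∧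
    ∀ i < Wk.len, Wk.root i = Wk'.root i ∧ Wk.lev i = Wk'.lev i

end Walk

end RootSystemCtx


section Aux

open RootSystemCtx

variable {V : Type*} [AddCommGroup V] [Module ℝ V] [FiniteDimensional ℝ V]

@[simp] lemma dAct_apply (w : V ≃ₗ[ℝ] V) (α : Dual ℝ V) (v : V) :
    dAct w α v = α (w.symm v) := rfl

lemma dAct_mul (u v : V ≃ₗ[ℝ] V) (α : Dual ℝ V) :
    dAct (u * v) α = dAct u (dAct v α) := by
  rfl

@[simp] lemma dAct_one (α : Dual ℝ V) : dAct (1 : V ≃ₗ[ℝ] V) α = α := rfl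

@[simp] lemma dAct_neg (w : V ≃ₗ[ℝ] V) (α : Dual ℝ V) : dAct w (-α) = -dAct w α := by
  ext x; simp [dAct]

lemma dAct_inv_apply (w : V ≃ₗ[ℝ] V) (α : Dual ℝ V) (v : V) :
    dAct w⁻¹ α v = α (w v) := rfl

lemma neg_mem_Phi (C : RootSystemCtx V) {α : Dual ℝ V} (hα : α ∈ C.Φ) : -α ∈ C.Φ := by
  have h := C.root_reflect_mem α hα α hα
  have h2 := C.coroot_self α hα
  rw [h2] at h
  have : α - (2 : ℝ) • α = -α := by
    rw [two_smul]; abel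
  rwa [this] at h

lemma neg_not_pos (C : RootSystemCtx V) {α : Dual ℝ V} (hα : α ∈ C.Pos) : -α ∉ C.Pos := by
  rcases C.pos_partition α (C.pos_subset hα) with ⟨_, h⟩ | ⟨_, h⟩
  · exact h
  · exact absurd hα h

lemma pos_or_neg (C : RootSystemCtx V) {α : Dual ℝ V} (hα : α ∈ C.Φ) :
    α ∈ C.Pos ∨ -α ∈ C.Pos := by
  rcases C.pos_partition α hα with ⟨h, _⟩ | ⟨h, _⟩
  · exact Or.inl h
  · exact Or.inr h

/-- Existence of a point where all elements of `Delta` take value one. -/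
lemma exists_delta_one (C : RootSystemCtx V) : ∃ v₀ : V, ∀ δ ∈ C.Delta, δ v₀ = 1 := by
  classical
  have hs : LinearIndependent ℝ
      (fun x : ((C.Delta : Set (Dual ℝ V))) => (x : Dual ℝ V)) := C.delta_indep
  rw [show (fun x : ((C.Delta : Set (Dual ℝ V))) => (x : Dual ℝ V)) = Subtype.val from rfl]
    at hs
  replace hs : LinearIndepOn ℝ id ((C.Delta : Set (Dual ℝ V))) := hs
  let b := Basis.extend hs
  let φ : Dual ℝ (Dual ℝ V) :=
    b.constr ℝ (fun i => if (i : Dual ℝ V) ∈ C.Delta then (1 : ℝ) else 0)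
  refine ⟨(Module.evalEquiv ℝ V).symm φ, fun δ hδ => ?_⟩
  have hδs : δ ∈ hs.extend (Set.subset_univ _) :=
    hs.subset_extend _ (by simpa using hδ)
  have hb : b ⟨δ, hδs⟩ = δ := Basis.extend_apply_self hs ⟨δ, hδs⟩
  have h1 : δ ((Module.evalEquiv ℝ V).symm φ) = φ δ :=
    Module.apply_evalEquiv_symm_apply ℝ V δ φ
  rw [h1, ← hb, Basis.constr_basis]
  simp [hδ]

lemma exists_chamber_point (C : RootSystemCtx V) : ∃ v₀ : V, ∀ α ∈ C.Pos, 0 < α v₀ := by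
  obtain ⟨v₀, hv₀⟩ := exists_delta_one C
  refine ⟨v₀, fun α hα => ?_⟩
  obtain ⟨c, hc⟩ := C.pos_of_delta α hα
  have hval : α v₀ = ∑ δ ∈ C.Delta, (c δ : ℝ) := by
    rw [hc]; simp only [LinearMap.sum_apply, Finset.sum_apply, LinearMap.smul_apply,
      smul_eq_mul]
    exact Finset.sum_congr rfl fun δ hδ => by rw [hv₀ δ hδ, mul_one]
  have hnonneg : 0 ≤ α v₀ := by
    rw [hval]; exact Finset.sum_nonneg fun δ _ => by positivity
  rcases hnonneg.lt_or_eq with h | h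
  · exact h
  · exfalso
    have hzero : ∀ δ ∈ C.Delta, (c δ : ℝ) = 0 := by
      intro δ hδ
      have := (Finset.sum_eq_zero_iff_of_nonneg (fun δ _ => by positivity)).mp
        (hval ▸ h.symm) δ hδ
      exact this
    apply C.root_ne_zero α (C.pos_subset hα)
    rw [hc]
    refine Finset.sum_eq_zero fun δ hδ => by rw [hzero δ hδ, zero_smul]

end Aux

section Aux2

open RootSystemCtx

variable {V : Type*} [AddCommGroup V] [Module ℝ V] [FiniteDimensional ℝ V]

/-- The reflection in the root `γ`, as a linear equivalence. -/
noncomputable def creflect (C : RootSystemCtx V) (γ : Dual ℝ V) : V ≃ₗ[ℝ] V :=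
  if h : γ (C.coroot γ) = 2 then
    LinearEquiv.ofInvolutive
      { toFun := fun v => v - γ v • C.coroot γ
        map_add' := fun x y => by
          simp only [map_add]; rw [add_smul]; abel
        map_smul' := fun c x => by
          simp only [map_smul, RingHom.id_apply, smul_sub, smul_eq_mul]
          rw [mul_comm, mul_smul, smul_comm] }
      (fun v => by
        show v - γ v • C.coroot γ - γ (v - γ v • C.coroot γ) • C.coroot γ = v
        have h2 : γ (v - γ v • C.coroot γ) = -(γ v) := by
          rw [map_sub, map_smul, smul_eq_mul, h]; ring
        rw [h2, neg_smul, sub_neg_eq_add]; abel)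
  else 1

lemma creflect_apply (C : RootSystemCtx V) (γ : Dual ℝ V) (hγ : γ ∈ C.Φ) (v : V) :
    creflect C γ v = v - γ v • C.coroot γ := by
  unfold creflect
  rw [dif_pos (C.coroot_self γ hγ)]
  rfl

lemma creflect_involutive (C : RootSystemCtx V) (γ : Dual ℝ V) (hγ : γ ∈ C.Φ) (v : V) :
    creflect C γ (creflect C γ v) = v := by
  have h := C.coroot_self γ hγ
  rw [creflect_apply C γ hγ, creflect_apply C γ hγ]
  have h2 : γ (v - γ v • C.coroot γ) = -(γ v) := by
    rw [map_sub, map_smul, smul_eq_mul, h]; ring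
  rw [h2, neg_smul, sub_neg_eq_add]; abel

lemma creflect_symm_apply (C : RootSystemCtx V) (γ : Dual ℝ V) (hγ : γ ∈ C.Φ) (v : V) :
    (creflect C γ).symm v = creflect C γ v := by
  have : creflect C γ ((creflect C γ).symm v) = creflect C γ (creflect C γ v) := by
    rw [LinearEquiv.apply_symm_apply, creflect_involutive C γ hγ]
  exact (creflect C γ).injective this

lemma creflect_mem_W (C : RootSystemCtx V) (γ : Dual ℝ V) (hγ : γ ∈ C.Φ) :
    creflect C γ ∈ C.W := by
  rw [C.W_gen]
  exact Subgroup.subset_closure ⟨γ, hγ, fun v => creflect_apply C γ hγ v⟩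

lemma creflect_inv (C : RootSystemCtx V) (γ : Dual ℝ V) (hγ : γ ∈ C.Φ) :
    (creflect C γ)⁻¹ = creflect C γ := by
  ext v
  exact creflect_symm_apply C γ hγ v

lemma dAct_creflect (C : RootSystemCtx V) (γ : Dual ℝ V) (hγ : γ ∈ C.Φ)
    (β : Dual ℝ V) : dAct (creflect C γ) β = β - β (C.coroot γ) • γ := by
  ext v
  rw [dAct_apply, creflect_symm_apply C γ hγ, creflect_apply C γ hγ]
  simp [mul_comm]

lemma dAct_mem_Phi (C : RootSystemCtx V) {u : V ≃ₗ[ℝ] V} (hu : u ∈ C.W) :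
    ∀ α ∈ C.Φ, dAct u α ∈ C.Φ := by
  rw [C.W_gen] at hu
  refine Subgroup.closure_induction (k := {g : V ≃ₗ[ℝ] V | ∃ α ∈ C.Φ, ∀ v : V, g v = v - α v • C.coroot α})
    (p := fun g _ => (∀ α ∈ C.Φ, dAct g α ∈ C.Φ) ∧ (∀ α ∈ C.Φ, dAct g⁻¹ α ∈ C.Φ))
    ?_ ?_ ?_ ?_ hu |>.1
  · rintro g ⟨δ, hδ, hg⟩
    have hgeq : g = creflect C δ := by
      ext v; rw [hg v, creflect_apply C δ hδ]
    subst hgeq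
    constructor
    · intro α hα
      rw [dAct_creflect C δ hδ α]
      exact C.root_reflect_mem δ hδ α hα
    · intro α hα
      rw [creflect_inv C δ hδ, dAct_creflect C δ hδ α]
      exact C.root_reflect_mem δ hδ α hα
  · exact ⟨fun α hα => by simpa using hα, fun α hα => by simpa using hα⟩
  · rintro x y _ _ ⟨hx, hx'⟩ ⟨hy, hy'⟩
    refine ⟨fun α hα => ?_, fun α hα => ?_⟩
    · rw [dAct_mul]; exact hx _ (hy _ hα)
    · rw [mul_inv_rev, dAct_mul]; exact hy' _ (hx' _ hα)
  · rintro x _ ⟨hx, hx'⟩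
    exact ⟨hx', by simpa using hx⟩

lemma pairing_int (C : RootSystemCtx V) {β : Dual ℝ V} (hβ : β ∈ C.Φ) {ν : V}
    (hν : ν ∈ C.Qv) : ∃ z : ℤ, β ν = (z : ℝ) := by
  refine AddSubgroup.closure_induction
    (p := fun x _ => ∃ z : ℤ, β x = (z : ℝ)) ?_ ?_ ?_ ?_ hν
  · rintro x ⟨δ, hδ, rfl⟩
    obtain ⟨n, hn⟩ := C.crystallographic δ (by exact_mod_cast hδ) β hβ
    exact ⟨n, hn⟩
  · exact ⟨0, by simp⟩
  · rintro x y _ _ ⟨zx, hx⟩ ⟨zy, hy⟩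
    exact ⟨zx + zy, by push_cast; simp [hx, hy]⟩
  · rintro x _ ⟨z, hz⟩
    exact ⟨-z, by push_cast; simp [hz]⟩

end Aux2

section Aux3

open RootSystemCtx

variable {V : Type*} [AddCommGroup V] [Module ℝ V] [FiniteDimensional ℝ V]

lemma dAct_add (w : V ≃ₗ[ℝ] V) (α β : Dual ℝ V) :
    dAct w (α + β) = dAct w α + dAct w β := rfl

lemma dAct_smul (w : V ≃ₗ[ℝ] V) (c : ℝ) (α : Dual ℝ V) :
    dAct w (c • α) = c • dAct w α := rfl

lemma pos_iff_pos_val (C : RootSystemCtx V) {v₀ : V} (hv₀ : ∀ α ∈ C.Pos, 0 < α v₀)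
    {δ : Dual ℝ V} (hδ : δ ∈ C.Φ) : δ ∈ C.Pos ↔ 0 < δ v₀ := by
  constructor
  · exact fun h => hv₀ δ h
  · intro h
    rcases pos_or_neg C hδ with h' | h'
    · exact h'
    · exfalso
      have := hv₀ _ h'
      simp only [LinearMap.neg_apply] at this
      linarith

lemma neg_val_of_neg_pos (C : RootSystemCtx V) {v₀ : V} (hv₀ : ∀ α ∈ C.Pos, 0 < α v₀)
    {δ : Dual ℝ V} (hδ : -δ ∈ C.Pos) : δ v₀ < 0 := by
  have := hv₀ _ hδ
  simp only [LinearMap.neg_apply] at this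
  linarith

lemma len_mul_creflect_lt (C : RootSystemCtx V) {v₀ : V}
    (hv₀ : ∀ α ∈ C.Pos, 0 < α v₀) {w : V ≃ₗ[ℝ] V} {γ : Dual ℝ V}
    (hw : w ∈ C.W) (hγ : γ ∈ C.Pos) (hinv : -(dAct w γ) ∈ C.Pos) :
    C.len (w * creflect C γ) < C.len w := by
  classical
  set t := creflect C γ with ht
  have hγΦ : γ ∈ C.Φ := C.pos_subset hγ
  have htW : t ∈ C.W := creflect_mem_W C γ hγΦ
  have htt : ∀ β : Dual ℝ V, dAct t (dAct t β) = β := by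
    intro β
    rw [← dAct_mul]
    have : t * t = 1 := by
      ext v
      exact creflect_involutive C γ hγΦ v
    rw [this, dAct_one]
  have hdt : ∀ β : Dual ℝ V, dAct t β = β - β (C.coroot γ) • γ :=
    fun β => dAct_creflect C γ hγΦ β
  have htΦ : ∀ β ∈ C.Φ, dAct t β ∈ C.Φ := dAct_mem_Phi C htW
  have hwΦ : ∀ β ∈ C.Φ, dAct w β ∈ C.Φ := dAct_mem_Phi C hw
  -- the three sets
  set B1 := C.Pos.filter (fun β => dAct t β ∈ C.Pos ∧ -(dAct w β) ∈ C.Pos) with hB1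
  set Pneg := C.Pos.filter (fun β => -(dAct t β) ∈ C.Pos ∧ -(dAct w β) ∈ C.Pos) with hPneg
  set Ppos := C.Pos.filter (fun β => -(dAct t β) ∈ C.Pos ∧ dAct w β ∈ C.Pos) with hPpos
  have hsplit : ∀ (s : Finset (Dual ℝ V)),
      s.card = (s.filter (fun β => dAct t β ∈ C.Pos)).card +
        (s.filter (fun β => dAct t β ∉ C.Pos)).card :=
    fun s => (Finset.card_filter_add_card_filter_not
      (p := fun β => dAct t β ∈ C.Pos)).symm
  -- length of w
  have hlenw : C.len w = B1.card + Pneg.card := by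
    unfold len invSet
    rw [hsplit]
    congr 1
    · rw [Finset.filter_filter, hB1]
      refine congrArg Finset.card (Finset.ext fun β => ?_)
      simp only [Finset.mem_filter]
      tauto
    · rw [Finset.filter_filter, hPneg]
      refine congrArg Finset.card (Finset.ext fun β => ?_)
      simp only [Finset.mem_filter]
      constructor
      · rintro ⟨hβ, hβ2, hβ3⟩
        refine ⟨hβ, ?_, hβ2⟩
        rcases pos_or_neg C (htΦ β (C.pos_subset hβ)) with h | h
        · exact absurd h hβ3
        · exact h
      · rintro ⟨hβ, hβ2, hβ3⟩
        refine ⟨hβ, hβ3, fun h => ?_⟩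
        exact neg_not_pos C h hβ2
  -- length of w * t
  have hlenwt : C.len (w * t) = B1.card + Ppos.card := by
    unfold len invSet
    rw [hsplit]
    rw [Finset.filter_filter, Finset.filter_filter]
    congr 1
    · -- bijection with B1 via β ↦ dAct t β
      apply Finset.card_bij (fun α _ => dAct t α)
      · intro α hα
        simp only [Finset.mem_filter] at hα
        obtain ⟨hα1, hα2, hα3⟩ := hα
        rw [dAct_mul] at hα2
        simp only [hB1, Finset.mem_filter]
        exact ⟨hα3, by rw [htt]; exact hα1, hα2⟩
      · intro α hα α' hα' hEq
        have := congrArg (dAct t) hEq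
        rwa [htt, htt] at this
      · intro β hβ
        simp only [hB1, Finset.mem_filter] at hβ
        obtain ⟨hβ1, hβ2, hβ3⟩ := hβ
        refine ⟨dAct t β, ?_, htt β⟩
        simp only [Finset.mem_filter]
        rw [dAct_mul, htt]
        exact ⟨hβ2, hβ3, hβ1⟩
    · -- bijection with Ppos via β ↦ -(dAct t β)
      apply Finset.card_bij (fun α _ => -(dAct t α))
      · intro α hα
        simp only [Finset.mem_filter] at hα
        obtain ⟨hα1, hα2, hα3⟩ := hα
        rw [dAct_mul] at hα2
        have hα4 : -(dAct t α) ∈ C.Pos := by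
          rcases pos_or_neg C (htΦ α (C.pos_subset hα1)) with h | h
          · exact absurd h hα3
          · exact h
        simp only [hPpos, Finset.mem_filter]
        refine ⟨hα4, ?_, ?_⟩
        · simp only [dAct_neg, htt, neg_neg]; exact hα1
        · simp only [dAct_neg, neg_neg]; exact hα2
      · intro α hα α' hα' hEq
        have := congrArg (fun x => dAct t (-x)) hEq
        simp only [dAct_neg, neg_neg, htt] at this
        exact this
      · intro β hβ
        simp only [hPpos, Finset.mem_filter] at hβ
        obtain ⟨hβ1, hβ2, hβ3⟩ := hβ
        refine ⟨-(dAct t β), ?_, by simp only [dAct_neg, htt, neg_neg]⟩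
        simp only [Finset.mem_filter]
        refine ⟨hβ2, ?_, ?_⟩
        · simp only [dAct_mul, dAct_neg, htt, neg_neg]
          exact hβ3
        · simp only [dAct_neg, htt]
          exact neg_not_pos C hβ1
  -- the injection from Ppos into Pneg.erase γ
  have hdtγ : dAct t γ = -γ := by
    rw [hdt, C.coroot_self γ hγΦ]
    ext v
    simp only [LinearMap.sub_apply, LinearMap.smul_apply, LinearMap.neg_apply,
      smul_eq_mul]
    ring
  have hγPneg : γ ∈ Pneg := by
    simp only [hPneg, Finset.mem_filter]
    refine ⟨hγ, ?_, hinv⟩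
    simpa [hdtγ] using hγ
  have himg : ∀ β ∈ Ppos, -(dAct t β) ∈ Pneg.erase γ := by
    intro β hβ
    simp only [hPpos, Finset.mem_filter] at hβ
    obtain ⟨hβ1, hβ2, hβ3⟩ := hβ
    have hc : 0 < β (C.coroot γ) := by
      have h1 : (dAct t β) v₀ < 0 := neg_val_of_neg_pos C hv₀ hβ2
      rw [hdt] at h1
      simp only [LinearMap.sub_apply, LinearMap.smul_apply, smul_eq_mul] at h1
      have hβv := hv₀ β hβ1
      have hγv := hv₀ γ hγ
      nlinarith
    have hsum : β + -(dAct t β) = β (C.coroot γ) • γ := by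
      rw [hdt]
      ext v
      simp
    have hneg : -(dAct w (-(dAct t β))) ∈ C.Pos := by
      have hmemΦ : dAct w (-(dAct t β)) ∈ C.Φ := by
        apply hwΦ
        exact C.pos_subset hβ2
      rcases pos_or_neg C hmemΦ with h | h
      · exfalso
        have hval1 : 0 < (dAct w β) v₀ := hv₀ _ hβ3
        have hval2 : 0 < (dAct w (-(dAct t β))) v₀ := hv₀ _ h
        have hval3 : (dAct w γ) v₀ < 0 := neg_val_of_neg_pos C hv₀ hinv
        have hkey : dAct w β + dAct w (-(dAct t β)) = β (C.coroot γ) • dAct w γ := by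
          rw [← dAct_add, hsum, dAct_smul]
        have := congrArg (fun f => f v₀) hkey
        simp only [LinearMap.add_apply, LinearMap.smul_apply, smul_eq_mul] at this
        nlinarith
      · exact h
    rw [Finset.mem_erase]
    constructor
    · intro hEq
      -- then β = γ, contradiction with hβ3 and hinv
      have hβγ : β = γ := by
        have h5 : dAct t β = -γ := by rw [← hEq, neg_neg]
        rw [← hdtγ] at h5
        have h6 := congrArg (dAct t) h5
        rwa [htt, htt] at h6
      rw [hβγ] at hβ3
      exact neg_not_pos C hβ3 (by simpa using hinv)
    · simp only [hPneg, Finset.mem_filter]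
      refine ⟨hβ2, ?_, hneg⟩
      simp only [dAct_neg, htt, neg_neg]
      exact hβ1
  have hinj : Set.InjOn (fun β => -(dAct t β)) Ppos := by
    intro β hβ β' hβ' hEq
    simp only at hEq
    have := congrArg (fun x => dAct t (-x)) hEq
    simp only [dAct_neg, neg_neg, htt] at this
    exact this
  have hcard : Ppos.card < Pneg.card := by
    calc Ppos.card = (Ppos.image (fun β => -(dAct t β))).card :=
          (Finset.card_image_of_injOn hinj).symm
      _ ≤ (Pneg.erase γ).card := Finset.card_le_card (by
          intro x hx
          simp only [Finset.mem_image] at hx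
          obtain ⟨β, hβ, rfl⟩ := hx
          exact himg β hβ)
      _ < Pneg.card := Finset.card_erase_lt_of_mem hγPneg
  omega

end Aux3

section Aux4

open RootSystemCtx

variable {V : Type*} [AddCommGroup V] [Module ℝ V] [FiniteDimensional ℝ V]

open scoped Classical

lemma dAct_inv_dAct (w : V ≃ₗ[ℝ] V) (α : Dual ℝ V) : dAct w (dAct w⁻¹ α) = α := by
  rw [← dAct_mul, mul_inv_cancel, dAct_one]

lemma dAct_dAct_inv (w : V ≃ₗ[ℝ] V) (α : Dual ℝ V) : dAct w⁻¹ (dAct w α) = α := by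
  rw [← dAct_mul, inv_mul_cancel, dAct_one]

lemma rho_eval_eq_sum (C : RootSystemCtx V) {w : V ≃ₗ[ℝ] V} (hw : w ∈ C.W) (μ : V) :
    C.rho (μ + w μ) =
      ∑ α ∈ C.Pos.filter (fun α => dAct w⁻¹ α ∈ C.Pos), (dAct w⁻¹ α) μ := by
  classical
  have hwinv : w⁻¹ ∈ C.W := inv_mem hw
  have hrho : C.rho (μ + w μ) =
      2⁻¹ * ((∑ δ ∈ C.Pos, δ μ) + ∑ δ ∈ C.Pos, (dAct w⁻¹ δ) μ) := by
    unfold rho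
    simp only [LinearMap.smul_apply, LinearMap.sum_apply, Finset.sum_apply,
      map_add, smul_eq_mul, Finset.sum_add_distrib]
    rw [mul_add]
    congr 1
  -- reindex the first sum
  set e : Dual ℝ V → Dual ℝ V :=
    fun α => if dAct w⁻¹ α ∈ C.Pos then dAct w⁻¹ α else -(dAct w⁻¹ α) with he
  set e' : Dual ℝ V → Dual ℝ V :=
    fun δ => if dAct w δ ∈ C.Pos then dAct w δ else -(dAct w δ) with he'
  have hmape : ∀ α ∈ C.Pos, e α ∈ C.Pos := by
    intro α hα
    by_cases h : dAct w⁻¹ α ∈ C.Pos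
    · simp only [he, if_pos h]; exact h
    · simp only [he, if_neg h]
      rcases pos_or_neg C (dAct_mem_Phi C hwinv α (C.pos_subset hα)) with h' | h'
      · exact absurd h' h
      · exact h'
  have hmape' : ∀ δ ∈ C.Pos, e' δ ∈ C.Pos := by
    intro δ hδ
    by_cases h : dAct w δ ∈ C.Pos
    · simp only [he', if_pos h]; exact h
    · simp only [he', if_neg h]
      rcases pos_or_neg C (dAct_mem_Phi C hw δ (C.pos_subset hδ)) with h' | h'
      · exact absurd h' h
      · exact h'
  have hee' : ∀ δ ∈ C.Pos, e (e' δ) = δ := by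
    intro δ hδ
    by_cases h : dAct w δ ∈ C.Pos
    · simp only [he', if_pos h, he, dAct_dAct_inv]
      rw [if_pos hδ]
    · simp only [he', if_neg h, he, dAct_neg, dAct_dAct_inv]
      rw [if_neg (neg_not_pos C hδ), neg_neg]
  have he'e : ∀ α ∈ C.Pos, e' (e α) = α := by
    intro α hα
    by_cases h : dAct w⁻¹ α ∈ C.Pos
    · simp only [he, if_pos h, he', dAct_inv_dAct]
      rw [if_pos hα]
    · simp only [he, if_neg h, he', dAct_neg, dAct_inv_dAct]
      rw [if_neg (neg_not_pos C hα), neg_neg]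
  have hreindex : ∑ δ ∈ C.Pos, δ μ = ∑ α ∈ C.Pos, (e α) μ := by
    refine Finset.sum_nbij' e' e hmape' hmape hee' he'e ?_
    intro δ hδ
    by_cases h : dAct w δ ∈ C.Pos
    · simp only [he', if_pos h, he, dAct_dAct_inv, if_pos hδ]
    · simp only [he', if_neg h, he, dAct_neg, dAct_dAct_inv,
        if_neg (neg_not_pos C hδ), neg_neg]
  rw [hrho, hreindex, ← Finset.sum_add_distrib]
  rw [← Finset.sum_filter_add_sum_filter_not C.Pos (fun α => dAct w⁻¹ α ∈ C.Pos)]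
  have hzero : ∑ α ∈ C.Pos.filter (fun α => dAct w⁻¹ α ∉ C.Pos),
      ((e α) μ + (dAct w⁻¹ α) μ) = 0 := by
    refine Finset.sum_eq_zero fun α hα => ?_
    rw [Finset.mem_filter] at hα
    simp only [he, if_neg hα.2, LinearMap.neg_apply]
    ring
  have htwo : ∑ α ∈ C.Pos.filter (fun α => dAct w⁻¹ α ∈ C.Pos),
      ((e α) μ + (dAct w⁻¹ α) μ) =
      2 * ∑ α ∈ C.Pos.filter (fun α => dAct w⁻¹ α ∈ C.Pos), (dAct w⁻¹ α) μ := by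
    rw [Finset.mul_sum]
    refine Finset.sum_congr rfl fun α hα => ?_
    rw [Finset.mem_filter] at hα
    simp only [he, if_pos hα.2]
    ring
  rw [hzero, htwo]
  ring

end Aux4

open RootSystemCtx in
set_option maxHeartbeats 1000000 in
/-- Let `μ` be a dominant integral coweight, `w` a minimal coset
representative for `μ`, and `x_w := t_{−w(μ)}w`.  Then (i) every minimal gallery from
`A` to `x_w(A)` has exactly `⟨ρ, μ + w(μ)⟩` crossings positive for the dominant
orientation (and its dimension `c⁺ + f⁺` equals `⟨ρ, μ + w(μ)⟩`), and (ii)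
`⟨ρ, μ + w(μ)⟩` equals the number of affine hyperplanes `H_{α,n}` separating the
dominant Weyl chamber from the alcove `x_w(A)`. -/
theorem minimal_gallery_dimension
    {V : Type*} [AddCommGroup V] [Module ℝ V] [FiniteDimensional ℝ V]
    (C : RootSystemCtx V) (μ : V)
    (hint : C.IsIntegral μ) (hdom : C.IsDominant μ)
    (w : V ≃ₗ[ℝ] V) (hmin : C.IsMinRep w μ) :
    (∀ G : RootSystemCtx.Walk C,
       G.IsMinGallery (affT (-(w μ)) w '' C.alcove) →
       (G.cPlus : ℝ) = C.rho (μ + w μ) ∧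
       ((G.cPlus + G.fPlus : ℕ) : ℝ) = C.rho (μ + w μ)) ∧
    (C.sepCount C.chamber (affT (-(w μ)) w '' C.alcove) : ℝ) = C.rho (μ + w μ) := by
  classical
  obtain ⟨hwW, hminlen⟩ := hmin
  have hwinv : w⁻¹ ∈ C.W := inv_mem hwW
  obtain ⟨v₀, hv₀⟩ := exists_chamber_point C
  set b : Set V := affT (-(w μ)) w '' C.alcove with hbdef
  -- small alcove points
  have hsmall : ∃ ε₁ : ℝ, 0 < ε₁ ∧ ε₁ • v₀ ∈ C.alcove := by
    set M : ℝ := ∑ α ∈ C.Pos, α v₀ with hM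
    have hM0 : 0 ≤ M := Finset.sum_nonneg fun α hα => (hv₀ α hα).le
    refine ⟨(M + 1)⁻¹, by positivity, ?_⟩
    intro α hα
    have h1 : 0 < α v₀ := hv₀ α hα
    have h2 : α v₀ ≤ M := Finset.single_le_sum (fun β hβ => (hv₀ β hβ).le) hα
    have h3 : α ((M + 1)⁻¹ • v₀) = (M + 1)⁻¹ * α v₀ := by
      rw [map_smul, smul_eq_mul]
    constructor
    · rw [h3]; positivity
    · rw [h3]
      rw [inv_mul_lt_one₀ (by positivity)]
      linarith
  obtain ⟨ε₁, hε₁pos, hε₁A⟩ := hsmall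
  have hAval : ∀ α ∈ C.Pos, 0 < α (ε₁ • v₀) ∧ α (ε₁ • v₀) < 1 := fun α hα => hε₁A α hα
  have hAne : C.alcove.Nonempty := ⟨ε₁ • v₀, hε₁A⟩
  have hchamber : ε₁ • v₀ ∈ C.chamber := fun α hα => (hAval α hα).1
  -- integer values
  have hzex : ∀ α : Dual ℝ V, ∃ z : ℤ, (α ∈ C.Pos → (dAct w⁻¹ α) μ = (z : ℝ)) := by
    intro α
    by_cases hα : α ∈ C.Pos
    · obtain ⟨z, hz⟩ := hint _ (dAct_mem_Phi C hwinv α (C.pos_subset hα))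
      exact ⟨z, fun _ => hz⟩
    · exact ⟨0, fun h => absurd h hα⟩
  choose zf hzf using hzex
  set p : Dual ℝ V → Prop := fun α => dAct w⁻¹ α ∈ C.Pos with hp
  have hz_nonneg : ∀ α ∈ C.Pos, p α → 0 ≤ zf α := by
    intro α hα hpα
    have := hdom _ hpα
    rw [hzf α hα] at this
    exact_mod_cast this
  have hz_negcase : ∀ α ∈ C.Pos, ¬ p α → zf α ≤ -1 := by
    intro α hα hpα
    have hαΦ : dAct w⁻¹ α ∈ C.Φ := dAct_mem_Phi C hwinv α (C.pos_subset hα)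
    have hγPos : -(dAct w⁻¹ α) ∈ C.Pos := by
      rcases pos_or_neg C hαΦ with h | h
      · exact absurd h hpα
      · exact h
    set γ : Dual ℝ V := -(dAct w⁻¹ α) with hγ
    have hγΦ : γ ∈ C.Φ := C.pos_subset hγPos
    have hγμ : γ μ = -(zf α : ℝ) := by
      rw [hγ, LinearMap.neg_apply, hzf α hα]
    have hγμ0 : 0 ≤ -(zf α : ℝ) := by
      rw [← hγμ]; exact hdom γ hγPos
    have hzle : zf α ≤ 0 := by exact_mod_cast neg_nonneg.mp hγμ0
    rcases hzle.lt_or_eq with h | h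
    · omega
    · exfalso
      -- minimality violated
      have hγμzero : γ μ = 0 := by rw [hγμ, h]; simp
      have htW : creflect C γ ∈ C.W := creflect_mem_W C γ hγΦ
      have htμ : (creflect C γ) μ = μ := by
        rw [creflect_apply C γ hγΦ, hγμzero, zero_smul, sub_zero]
      have hle := hminlen (creflect C γ) htW htμ
      have hlt : C.len (w * creflect C γ) < C.len w := by
        apply len_mul_creflect_lt C hv₀ hwW hγPos
        have : dAct w γ = -α := by
          rw [hγ, dAct_neg, dAct_inv_dAct]
        rw [this, neg_neg]
        exact hα
      omega
  -- value of α on b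
  have hvalb : ∀ α : Dual ℝ V, α ∈ C.Pos → ∀ v : V,
      α (affT (-(w μ)) w v) = (dAct w⁻¹ α) v - (zf α : ℝ) := by
    intro α hα v
    show α (w v + -(w μ)) = _
    rw [map_add, map_neg]
    rw [show α (w μ) = (dAct w⁻¹ α) μ from rfl, hzf α hα]
    rw [show α (w v) = (dAct w⁻¹ α) v from rfl]
    ring
  have hmemb : ∀ x, x ∈ b ↔ ∃ v ∈ C.alcove, affT (-(w μ)) w v = x := by
    intro x
    rw [hbdef]
    simp [Set.mem_image]
  -- range facts for dAct w⁻¹ α on the alcove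
  have hrange : ∀ α ∈ C.Pos, ∀ v ∈ C.alcove,
      (p α → 0 < (dAct w⁻¹ α) v ∧ (dAct w⁻¹ α) v < 1) ∧
      (¬ p α → -1 < (dAct w⁻¹ α) v ∧ (dAct w⁻¹ α) v < 0) := by
    intro α hα v hv
    constructor
    · intro hpα
      exact hv _ hpα
    · intro hpα
      have hαΦ : dAct w⁻¹ α ∈ C.Φ := dAct_mem_Phi C hwinv α (C.pos_subset hα)
      have hγPos : -(dAct w⁻¹ α) ∈ C.Pos := by
        rcases pos_or_neg C hαΦ with h | h
        · exact absurd h hpα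
        · exact h
      have := hv _ hγPos
      simp only [LinearMap.neg_apply] at this
      constructor <;> linarith [this.1, this.2]
  -- characterizations
  have c1 : ∀ α ∈ C.Pos, ∀ n : ℤ, (∀ v ∈ C.alcove, (n:ℝ) < α v) ↔ n ≤ 0 := by
    intro α hα n
    constructor
    · intro h
      have h2 := h _ hε₁A
      have h3 := (hAval α hα).2
      have : (n : ℝ) < 1 := lt_trans h2 h3
      exact_mod_cast Int.lt_add_one_iff.mp (by exact_mod_cast this)
    · intro h v hv
      have : (n : ℝ) ≤ 0 := by exact_mod_cast h
      exact lt_of_le_of_lt this (hv α hα).1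
  have c2 : ∀ α ∈ C.Pos, ∀ n : ℤ, (∀ v ∈ C.alcove, α v < (n:ℝ)) ↔ 1 ≤ n := by
    intro α hα n
    constructor
    · intro h
      have h2 := h _ hε₁A
      have h3 := (hAval α hα).1
      have : (0 : ℝ) < n := lt_trans h3 h2
      exact_mod_cast this
    · intro h v hv
      have : (1 : ℝ) ≤ n := by exact_mod_cast h
      exact lt_of_lt_of_le (hv α hα).2 this
  have c3 : ∀ α ∈ C.Pos, ∀ n : ℤ, (∀ v ∈ C.chamber, (n:ℝ) < α v) ↔ n ≤ 0 := by
    intro α hα n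
    constructor
    · intro h
      have h2 := h _ hchamber
      have h3 := (hAval α hα).2
      have : (n : ℝ) < 1 := lt_trans h2 h3
      exact_mod_cast Int.lt_add_one_iff.mp (by exact_mod_cast this)
    · intro h v hv
      have : (n : ℝ) ≤ 0 := by exact_mod_cast h
      exact lt_of_le_of_lt this (hv α hα)
  have c4 : ∀ α ∈ C.Pos, ∀ n : ℤ, ¬ (∀ v ∈ C.chamber, α v < (n:ℝ)) := by
    intro α hα n h
    set r : ℝ := max 1 ((n:ℝ) + 1) with hr
    have hr1 : (1:ℝ) ≤ r := le_max_left _ _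
    have hrn : (n:ℝ) + 1 ≤ r := le_max_right _ _
    have hαv₀ : 0 < α v₀ := hv₀ α hα
    have hmem : (r / α v₀) • v₀ ∈ C.chamber := by
      intro β hβ
      rw [map_smul, smul_eq_mul]
      have := hv₀ β hβ
      positivity
    have hval : α ((r / α v₀) • v₀) = r := by
      rw [map_smul, smul_eq_mul, div_mul_cancel₀]
      exact ne_of_gt hαv₀
    have := h _ hmem
    rw [hval] at this
    linarith
  have c5 : ∀ α ∈ C.Pos, p α → ∀ n : ℤ, (∀ x ∈ b, α x < (n:ℝ)) ↔ 1 - zf α ≤ n := by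
    intro α hα hpα n
    constructor
    · intro h
      have hmem : affT (-(w μ)) w (ε₁ • v₀) ∈ b := ⟨_, hε₁A, rfl⟩
      have h2 := h _ hmem
      rw [hvalb α hα] at h2
      have h3 := ((hrange α hα _ hε₁A).1 hpα).1
      have : (-(zf α) : ℝ) < n := by push_cast; linarith
      have : -(zf α) < n := by exact_mod_cast this
      omega
    · intro h x hx
      obtain ⟨v, hv, rfl⟩ := (hmemb x).mp hx
      rw [hvalb α hα]
      have h3 := ((hrange α hα _ hv).1 hpα).2
      have : ((1 - zf α : ℤ) : ℝ) ≤ n := by exact_mod_cast h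
      push_cast at this
      linarith
  have c6 : ∀ α ∈ C.Pos, p α → ∀ n : ℤ, (∀ x ∈ b, (n:ℝ) < α x) ↔ n ≤ -(zf α) := by
    intro α hα hpα n
    constructor
    · intro h
      have hmem : affT (-(w μ)) w (ε₁ • v₀) ∈ b := ⟨_, hε₁A, rfl⟩
      have h2 := h _ hmem
      rw [hvalb α hα] at h2
      have h3 := ((hrange α hα _ hε₁A).1 hpα).2
      have : (n : ℝ) < 1 - zf α := by push_cast; linarith
      have : n < 1 - zf α := by exact_mod_cast this
      omega
    · intro h x hx
      obtain ⟨v, hv, rfl⟩ := (hmemb x).mp hx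
      rw [hvalb α hα]
      have h3 := ((hrange α hα _ hv).1 hpα).1
      have : (n : ℝ) ≤ -(zf α) := by exact_mod_cast h
      push_cast at this ⊢
      linarith
  have c7 : ∀ α ∈ C.Pos, ¬ p α → ∀ n : ℤ, (∀ x ∈ b, α x < (n:ℝ)) ↔ -(zf α) ≤ n := by
    intro α hα hpα n
    constructor
    · intro h
      have hmem : affT (-(w μ)) w (ε₁ • v₀) ∈ b := ⟨_, hε₁A, rfl⟩
      have h2 := h _ hmem
      rw [hvalb α hα] at h2
      have h3 := ((hrange α hα _ hε₁A).2 hpα).1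
      have : (-(zf α) - 1 : ℝ) < n := by push_cast; linarith
      have : -(zf α) - 1 < n := by exact_mod_cast this
      omega
    · intro h x hx
      obtain ⟨v, hv, rfl⟩ := (hmemb x).mp hx
      rw [hvalb α hα]
      have h3 := ((hrange α hα _ hv).2 hpα).2
      have : (-(zf α) : ℝ) ≤ n := by exact_mod_cast h
      push_cast at this ⊢
      linarith
  have c8 : ∀ α ∈ C.Pos, ¬ p α → ∀ n : ℤ, (∀ x ∈ b, (n:ℝ) < α x) ↔ n ≤ -(zf α) - 1 := by
    intro α hα hpα n
    constructor
    · intro h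
      have hmem : affT (-(w μ)) w (ε₁ • v₀) ∈ b := ⟨_, hε₁A, rfl⟩
      have h2 := h _ hmem
      rw [hvalb α hα] at h2
      have h3 := ((hrange α hα _ hε₁A).2 hpα).2
      have : (n : ℝ) < -(zf α) := by push_cast; linarith
      have : n < -(zf α) := by exact_mod_cast this
      omega
    · intro h x hx
      obtain ⟨v, hv, rfl⟩ := (hmemb x).mp hx
      rw [hvalb α hα]
      have h3 := ((hrange α hα _ hv).2 hpα).1
      have : (n : ℝ) ≤ -(zf α) - 1 := by exact_mod_cast h
      push_cast at this ⊢
      linarith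
  -- SepBy characterizations
  have sA : ∀ α ∈ C.Pos, ∀ n : ℤ,
      SepBy α n C.alcove b ↔
        (if p α then 1 - zf α ≤ n ∧ n ≤ 0 else 1 ≤ n ∧ n ≤ -(zf α) - 1) := by
    intro α hα n
    by_cases hpα : p α
    · rw [if_pos hpα]
      unfold SepBy
      rw [c1 α hα n, c2 α hα n, c5 α hα hpα n, c6 α hα hpα n]
      have hz := hz_nonneg α hα hpα
      constructor
      · rintro (⟨h1, h2⟩ | ⟨h1, h2⟩)
        · omega
        · omega
      · intro ⟨h1, h2⟩
        right; omega
    · rw [if_neg hpα]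
      unfold SepBy
      rw [c1 α hα n, c2 α hα n, c7 α hα hpα n, c8 α hα hpα n]
      have hz := hz_negcase α hα hpα
      constructor
      · rintro (⟨h1, h2⟩ | ⟨h1, h2⟩)
        · omega
        · omega
      · intro ⟨h1, h2⟩
        left; omega
  have sC : ∀ α ∈ C.Pos, ∀ n : ℤ,
      SepBy α n C.chamber b ↔
        (if p α then 1 - zf α ≤ n ∧ n ≤ 0 else False) := by
    intro α hα n
    by_cases hpα : p α
    · rw [if_pos hpα]
      unfold SepBy
      rw [c3 α hα n, c5 α hα hpα n]
      have hz := hz_nonneg α hα hpα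
      constructor
      · rintro (⟨h1, h2⟩ | ⟨h1, h2⟩)
        · exact absurd h1 (c4 α hα n)
        · omega
      · intro ⟨h1, h2⟩
        right; omega
    · rw [if_neg hpα]
      unfold SepBy
      rw [c3 α hα n, c7 α hα hpα n]
      have hz := hz_negcase α hα hpα
      constructor
      · rintro (⟨h1, h2⟩ | ⟨h1, h2⟩)
        · exact absurd h1 (c4 α hα n)
        · omega
      · exact False.elim
  -- explicit finsets
  set SepF : Finset (Dual ℝ V × ℤ) := C.Pos.biUnion (fun α =>
      (if p α then Finset.Icc (1 - zf α) 0 else Finset.Icc 1 (-(zf α) - 1)).image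
        (fun n => (α, n))) with hSepF
  set SepCF : Finset (Dual ℝ V × ℤ) := C.Pos.biUnion (fun α =>
      (if p α then Finset.Icc (1 - zf α) 0 else ∅).image
        (fun n => (α, n))) with hSepCF
  have hmemSepF : ∀ q : Dual ℝ V × ℤ, q ∈ SepF ↔
      (q.1 ∈ C.Pos ∧ (if p q.1 then 1 - zf q.1 ≤ q.2 ∧ q.2 ≤ 0
        else 1 ≤ q.2 ∧ q.2 ≤ -(zf q.1) - 1)) := by
    rintro ⟨α, n⟩
    simp only [hSepF, Finset.mem_biUnion, Finset.mem_image, Finset.mem_Icc, Prod.mk.injEq]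
    constructor
    · rintro ⟨α', hα', n', hn', hEq1, hEq2⟩
      subst hEq1; subst hEq2
      exact ⟨hα', by split_ifs at hn' ⊢ <;> simp_all⟩
    · rintro ⟨hα, hcond⟩
      refine ⟨α, hα, n, ?_, rfl, rfl⟩
      split_ifs at hcond ⊢ <;> simp_all
  have hmemSepCF : ∀ q : Dual ℝ V × ℤ, q ∈ SepCF ↔
      (q.1 ∈ C.Pos ∧ p q.1 ∧ 1 - zf q.1 ≤ q.2 ∧ q.2 ≤ 0) := by
    rintro ⟨α, n⟩
    simp only [hSepCF, Finset.mem_biUnion, Finset.mem_image, Finset.mem_Icc, Prod.mk.injEq]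
    constructor
    · rintro ⟨α', hα', n', hn', hEq1, hEq2⟩
      subst hEq1; subst hEq2
      split_ifs at hn' with h
      · rw [Finset.mem_Icc] at hn'
        exact ⟨hα', h, hn'.1, hn'.2⟩
      · simp at hn'
    · rintro ⟨hα, hpα, h1, h2⟩
      refine ⟨α, hα, n, ?_, rfl, rfl⟩
      rw [if_pos hpα]
      exact Finset.mem_Icc.mpr ⟨h1, h2⟩
  -- set equalities
  have hsetA : {q : Dual ℝ V × ℤ | q.1 ∈ C.Pos ∧ SepBy q.1 q.2 C.alcove b} = ↑SepF := by
    ext q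
    simp only [Set.mem_setOf_eq, Finset.coe_mem, Finset.mem_coe, hmemSepF]
    constructor
    · rintro ⟨hq, hsep⟩
      exact ⟨hq, (sA q.1 hq q.2).mp hsep⟩
    · rintro ⟨hq, hcond⟩
      exact ⟨hq, (sA q.1 hq q.2).mpr hcond⟩
  have hsetC : {q : Dual ℝ V × ℤ | q.1 ∈ C.Pos ∧ SepBy q.1 q.2 C.chamber b} = ↑SepCF := by
    ext q
    simp only [Set.mem_setOf_eq, Finset.mem_coe, hmemSepCF]
    constructor
    · rintro ⟨hq, hsep⟩
      have := (sC q.1 hq q.2).mp hsep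
      split_ifs at this with h
      · exact ⟨hq, h, this⟩
    · rintro ⟨hq, hpq, hcond⟩
      refine ⟨hq, (sC q.1 hq q.2).mpr ?_⟩
      rw [if_pos hpq]
      exact hcond
  -- counting
  have hsepCountA : C.sepCount C.alcove b = SepF.card := by
    unfold sepCount
    rw [hsetA, Set.ncard_coe_finset]
  have hsepCountC : C.sepCount C.chamber b = SepCF.card := by
    unfold sepCount
    rw [hsetC, Set.ncard_coe_finset]
  have hdisj : ∀ (f : Dual ℝ V → Finset ℤ), ∀ x ∈ C.Pos, ∀ y ∈ C.Pos, x ≠ y →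
      Disjoint ((f x).image (fun n => (x, n))) ((f y).image (fun n => (y, n))) := by
    intro f x _ y _ hxy
    rw [Finset.disjoint_left]
    rintro ⟨a, c⟩ ha hb
    simp only [Finset.mem_image, Prod.mk.injEq] at ha hb
    obtain ⟨_, _, rfl, _⟩ := ha
    obtain ⟨_, _, rfl, _⟩ := hb
    exact hxy rfl
  have hcard1 : SepCF.card = ∑ α ∈ C.Pos.filter p, (zf α).toNat := by
    rw [hSepCF, Finset.card_biUnion (hdisj _)]
    rw [← Finset.sum_filter_add_sum_filter_not C.Pos p
      (fun α => ((if p α then Finset.Icc (1 - zf α) 0 else ∅).image (fun n => (α, n))).card)]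
    have h2 : ∑ α ∈ C.Pos.filter (fun α => ¬ p α),
        (((if p α then Finset.Icc (1 - zf α) 0 else ∅).image (fun n => (α, n))).card) = 0 := by
      refine Finset.sum_eq_zero fun α hα => ?_
      rw [Finset.mem_filter] at hα
      rw [if_neg hα.2]
      simp
    rw [h2, add_zero]
    refine Finset.sum_congr rfl fun α hα => ?_
    rw [Finset.mem_filter] at hα
    rw [if_pos hα.2, Finset.card_image_of_injective _ (Prod.mk_right_injective α), Int.card_Icc]
    omega
  have hcardCF : (SepCF.card : ℝ) = C.rho (μ + w μ) := by
    have hfilter : C.Pos.filter (fun α => dAct w⁻¹ α ∈ C.Pos) = C.Pos.filter p := by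
      apply Finset.filter_congr
      intro x _
      simp [hp]
    rw [rho_eval_eq_sum C hwW μ, hcard1, hfilter]
    push_cast
    refine Finset.sum_congr rfl fun α hα => ?_
    rw [Finset.mem_filter] at hα
    rw [hzf α hα.1]
    exact_mod_cast congrArg (fun z : ℤ => (z : ℝ)) (Int.toNat_of_nonneg (hz_nonneg α hα.1 hα.2))
  refine ⟨?_, by rw [hsepCountC]; exact hcardCF⟩
  intro G hG
  obtain ⟨hcross, hend, hlen⟩ := hG
  have hlenN : G.len = SepF.card := by rw [hlen, hsepCountA]
  have hfzero : G.fPlus = 0 := by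
    unfold Walk.fPlus
    rw [Finset.card_eq_zero, Finset.filter_eq_empty_iff]
    intro i hi
    rw [Finset.mem_range] at hi
    exact fun hf => hcross i hi hf
  have himg : ∀ i < G.len, G.alc (i+1) = C.reflH (G.root i) (G.lev i) '' G.alc i := by
    intro i hi
    rcases G.step i hi with h | h
    · exact absurd h (hcross i hi)
    · exact h
  have hrootpos : ∀ i, i < G.len → G.root i ∈ C.Pos := fun i hi => (G.wall i hi).1
  have hsepi : ∀ i < G.len, SepBy (G.root i) (G.lev i) (G.alc i) (G.alc (i+1)) := by
    intro i hi
    rw [himg i hi]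
    exact (G.wall i hi).2.1
  have huniqi : ∀ i < G.len, ∀ β ∈ C.Pos, ∀ m : ℤ,
      SepBy β m (G.alc i) (G.alc (i+1)) → β = G.root i ∧ m = G.lev i := by
    intro i hi β hβ m hsep
    rw [himg i hi] at hsep
    exact (G.wall i hi).2.2 β hβ m hsep
  have hnei : ∀ i, i ≤ G.len → (G.alc i).Nonempty := by
    intro i hi
    obtain ⟨ν, hν, u, hu, halc⟩ := G.isAlcove i hi
    rw [halc]
    exact hAne.image _
  have hsided : ∀ i, i ≤ G.len → ∀ β ∈ C.Pos, ∀ m : ℤ,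
      (∀ v ∈ G.alc i, β v < (m:ℝ)) ∨ (∀ v ∈ G.alc i, (m:ℝ) < β v) := by
    intro i hi β hβ m
    obtain ⟨ν, hν, u, hu, halc⟩ := G.isAlcove i hi
    obtain ⟨q, hq⟩ := pairing_int C (C.pos_subset hβ) hν
    have hδΦ : dAct u⁻¹ β ∈ C.Φ := dAct_mem_Phi C (inv_mem hu) β (C.pos_subset hβ)
    have hval : ∀ v : V, β (affT ν u v) = (dAct u⁻¹ β) v + (q : ℝ) := by
      intro v
      show β (u v + ν) = _
      rw [map_add, hq, show β (u v) = (dAct u⁻¹ β) v from rfl]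
    rcases pos_or_neg C hδΦ with h | h
    · rcases le_or_gt m q with hm | hm
      · right
        intro x hx
        rw [halc] at hx
        obtain ⟨v, hv, rfl⟩ := hx
        rw [hval]
        have h1 := (hv _ h).1
        have h2 : (m:ℝ) ≤ q := by exact_mod_cast hm
        linarith
      · left
        intro x hx
        rw [halc] at hx
        obtain ⟨v, hv, rfl⟩ := hx
        rw [hval]
        have h1 := (hv _ h).2
        have h2 : (q:ℝ) + 1 ≤ m := by exact_mod_cast hm
        linarith
    · have hbnd : ∀ v ∈ C.alcove, -1 < (dAct u⁻¹ β) v ∧ (dAct u⁻¹ β) v < 0 := by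
        intro v hv
        have := hv _ h
        simp only [LinearMap.neg_apply] at this
        constructor <;> linarith [this.1, this.2]
      rcases le_or_gt m (q - 1) with hm | hm
      · right
        intro x hx
        rw [halc] at hx
        obtain ⟨v, hv, rfl⟩ := hx
        rw [hval]
        have h1 := (hbnd v hv).1
        have h2 : (m:ℝ) ≤ (q:ℝ) - 1 := by exact_mod_cast hm
        linarith
      · left
        intro x hx
        rw [halc] at hx
        obtain ⟨v, hv, rfl⟩ := hx
        rw [hval]
        have h1 := (hbnd v hv).2
        have h2 : (q:ℝ) ≤ m := by
          have : q ≤ m := by omega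
          exact_mod_cast this
        linarith
  set PS : Dual ℝ V × ℤ → ℕ → Prop :=
    fun qq i => ∀ v ∈ G.alc i, (qq.2:ℝ) < qq.1 v with hPS
  have hnotPS : ∀ i, i ≤ G.len → ∀ qq : Dual ℝ V × ℤ,
      (∀ v ∈ G.alc i, qq.1 v < (qq.2:ℝ)) → ¬ PS qq i := by
    intro i hi qq hlow hps
    obtain ⟨x, hx⟩ := hnei i hi
    linarith [hlow x hx, hps x hx]
  have hstepiff : ∀ i, ∀ (hi : i < G.len), ∀ qq : Dual ℝ V × ℤ, qq.1 ∈ C.Pos →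
      ((qq = (G.root i, G.lev i) → (PS qq i ↔ ¬ PS qq (i+1))) ∧
       (qq ≠ (G.root i, G.lev i) → (PS qq i ↔ PS qq (i+1)))) := by
    intro i hi qq hq
    constructor
    · rintro rfl
      rcases hsepi i hi with ⟨h1, h2⟩ | ⟨h1, h2⟩
      · refine iff_of_false (hnotPS i (le_of_lt hi) _ h1) ?_
        intro hn
        exact hn h2
      · refine iff_of_true h1 (hnotPS (i+1) hi _ h2)
    · intro hne
      have hnosep : ¬ SepBy qq.1 qq.2 (G.alc i) (G.alc (i+1)) := by
        intro hs
        obtain ⟨hh1, hh2⟩ := huniqi i hi _ hq _ hs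
        exact hne (Prod.ext hh1 hh2)
      rcases hsided i (le_of_lt hi) qq.1 hq qq.2 with hL | hR
      · rcases hsided (i+1) hi qq.1 hq qq.2 with hL' | hR'
        · exact iff_of_false (hnotPS i (le_of_lt hi) _ hL) (hnotPS (i+1) hi _ hL')
        · exact absurd (Or.inl ⟨hL, hR'⟩) hnosep
      · rcases hsided (i+1) hi qq.1 hq qq.2 with hL' | hR'
        · exact absurd (Or.inr ⟨hR, hL'⟩) hnosep
        · exact iff_of_true hR hR'
  have hprefix : ∀ qq : Dual ℝ V × ℤ, qq.1 ∈ C.Pos → ∀ i, i ≤ G.len →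
      (∀ j < i, (G.root j, G.lev j) ≠ qq) → (PS qq 0 ↔ PS qq i) := by
    intro qq hq i
    induction i with
    | zero => exact fun _ _ => Iff.rfl
    | succ k ih =>
      intro hk hj
      have h1 : PS qq 0 ↔ PS qq k :=
        ih (Nat.le_of_succ_le hk) (fun j hjk => hj j (Nat.lt_succ_of_lt hjk))
      have h2 := (hstepiff k hk qq hq).2
        (fun hEq => hj k (Nat.lt_succ_self k) hEq.symm)
      exact h1.trans h2
  have hsepflip : ∀ qq : Dual ℝ V × ℤ, qq.1 ∈ C.Pos →
      (SepBy qq.1 qq.2 C.alcove b ↔ ¬ (PS qq 0 ↔ PS qq G.len)) := by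
    intro qq hq
    have h0 : G.alc 0 = C.alcove := G.start
    have hN : G.alc G.len = b := hend
    constructor
    · intro hsep
      rcases hsep with ⟨h1, h2⟩ | ⟨h1, h2⟩
      · intro hiff
        have hPSN : PS qq G.len := by
          intro v hv
          exact h2 v (hN ▸ hv)
        have hPS0 : PS qq 0 := hiff.mpr hPSN
        exact hnotPS 0 (Nat.zero_le _) qq (fun v hv => h1 v (h0 ▸ hv)) hPS0
      · intro hiff
        have hPS0 : PS qq 0 := by
          intro v hv
          exact h1 v (h0 ▸ hv)
        have hPSN := hiff.mp hPS0
        exact hnotPS G.len le_rfl qq (fun v hv => h2 v (hN ▸ hv)) hPSN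
    · intro hniff
      rcases hsided 0 (Nat.zero_le _) qq.1 hq qq.2 with hL | hR
      · rcases hsided G.len le_rfl qq.1 hq qq.2 with hL' | hR'
        · exact absurd (iff_of_false (hnotPS 0 (Nat.zero_le _) _ hL)
            (hnotPS G.len le_rfl _ hL')) hniff
        · left
          exact ⟨fun v hv => hL v (by rw [h0]; exact hv),
            fun v hv => hR' v (by rw [hN]; exact hv)⟩
      · rcases hsided G.len le_rfl qq.1 hq qq.2 with hL' | hR'
        · right
          exact ⟨fun v hv => hR v (by rw [h0]; exact hv),
            fun v hv => hL' v (by rw [hN]; exact hv)⟩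
        · exact absurd (iff_of_true hR hR') hniff
  -- counting
  set φ : ℕ → Dual ℝ V × ℤ := fun i => (G.root i, G.lev i) with hφ
  set T : Finset (Dual ℝ V × ℤ) := (Finset.range G.len).image φ with hT
  set cfib : Dual ℝ V × ℤ → ℕ :=
    fun qq => ((Finset.range G.len).filter (fun i => φ i = qq)).card with hcfib
  have hSepF_sub_T : SepF ⊆ T := by
    intro qq hqq
    have hqprop : qq.1 ∈ C.Pos ∧ SepBy qq.1 qq.2 C.alcove b := by
      rw [← Finset.mem_coe, ← hsetA] at hqq
      exact hqq
    obtain ⟨hq1, hq2⟩ := hqprop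
    by_contra hnT
    have hno : ∀ j < G.len, (G.root j, G.lev j) ≠ qq := by
      intro j hj hEq
      apply hnT
      rw [hT]
      exact Finset.mem_image.mpr ⟨j, Finset.mem_range.mpr hj, hEq⟩
    exact (hsepflip qq hq1).mp hq2 (hprefix qq hq1 G.len le_rfl hno)
  have hfib : G.len = ∑ qq ∈ T, cfib qq := by
    conv_lhs => rw [← Finset.card_range G.len]
    exact Finset.card_eq_sum_card_fiberwise (fun x hx => Finset.mem_image_of_mem φ hx)
  have hfib_pos : ∀ qq ∈ T, 1 ≤ cfib qq := by
    intro qq hqq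
    rw [hT] at hqq
    obtain ⟨i, hi, rfl⟩ := Finset.mem_image.mp hqq
    exact Finset.card_pos.mpr ⟨i, Finset.mem_filter.mpr ⟨hi, rfl⟩⟩
  have hsum1 : SepF.card ≤ ∑ qq ∈ SepF, cfib qq := by
    calc SepF.card = ∑ _qq ∈ SepF, 1 := by rw [Finset.sum_const, smul_eq_mul, mul_one]
      _ ≤ ∑ qq ∈ SepF, cfib qq :=
          Finset.sum_le_sum (fun qq hq => hfib_pos qq (hSepF_sub_T hq))
  have hsum2 : ∑ qq ∈ T \ SepF, cfib qq + ∑ qq ∈ SepF, cfib qq = ∑ qq ∈ T, cfib qq :=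
    Finset.sum_sdiff hSepF_sub_T
  have hsum3 : ∑ qq ∈ T, cfib qq = SepF.card := by
    rw [← hfib, hlenN]
  have hsdiff0 : ∑ qq ∈ T \ SepF, cfib qq = 0 := by omega
  have hTsub : ∀ qq ∈ T, qq ∈ SepF := by
    intro qq hqq
    by_contra h
    have hmem : qq ∈ T \ SepF := Finset.mem_sdiff.mpr ⟨hqq, h⟩
    have hz : cfib qq = 0 := by
      have := Finset.sum_eq_zero_iff.mp hsdiff0 qq hmem
      exact this
    have := hfib_pos qq hqq
    omega
  have hone : ∀ qq ∈ SepF, cfib qq = 1 := by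
    intro qq hqq
    by_contra hne
    have hge : 2 ≤ cfib qq := by
      have := hfib_pos qq (hSepF_sub_T hqq)
      omega
    have hlt : ∑ _x ∈ SepF, 1 < ∑ x ∈ SepF, cfib x :=
      Finset.sum_lt_sum (fun x hx => hfib_pos x (hSepF_sub_T hx)) ⟨qq, hqq, by omega⟩
    rw [Finset.sum_const, smul_eq_mul, mul_one] at hlt
    omega
  have hinj : ∀ i, i < G.len → ∀ j, j < G.len → φ i = φ j → i = j := by
    intro i hi j hj hEq
    have hmemT : φ i ∈ T := by
      rw [hT]
      exact Finset.mem_image.mpr ⟨i, Finset.mem_range.mpr hi, rfl⟩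
    have h1 : cfib (φ i) = 1 := hone _ (hTsub _ hmemT)
    have hi' : i ∈ (Finset.range G.len).filter (fun k => φ k = φ i) :=
      Finset.mem_filter.mpr ⟨Finset.mem_range.mpr hi, rfl⟩
    have hj' : j ∈ (Finset.range G.len).filter (fun k => φ k = φ i) :=
      Finset.mem_filter.mpr ⟨Finset.mem_range.mpr hj, hEq.symm⟩
    exact Finset.card_le_one.mp (le_of_eq h1) i hi' j hj'
  have hPosAt : ∀ i, i < G.len → ((G.IsCrossing i ∧ G.PosAt i) ↔ G.lev i ≤ 0) := by
    intro i hi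
    have hq1 : (φ i).1 ∈ C.Pos := hrootpos i hi
    have hps : G.PosAt i ↔ PS (φ i) i := Iff.rfl
    have hpre : PS (φ i) 0 ↔ PS (φ i) i :=
      hprefix (φ i) hq1 i (le_of_lt hi)
        (fun j hj hEq => by
          have := hinj j (lt_trans hj hi) i hi hEq
          omega)
    have hPS0 : PS (φ i) 0 ↔ G.lev i ≤ 0 := by
      have h0 : G.alc 0 = C.alcove := G.start
      constructor
      · intro h
        apply (c1 (G.root i) hq1 (G.lev i)).mp
        intro v hv
        exact h v (by rw [h0]; exact hv)
      · intro h v hv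
        exact (c1 (G.root i) hq1 (G.lev i)).mpr h v (by rw [← h0]; exact hv)
    constructor
    · rintro ⟨_, hpa⟩
      exact hPS0.mp (hpre.mpr (hps.mp hpa))
    · intro h
      exact ⟨hcross i hi, hps.mpr (hpre.mp (hPS0.mpr h))⟩
  have hcPlus : G.cPlus = ((Finset.range G.len).filter (fun i => (φ i).2 ≤ 0)).card := by
    unfold Walk.cPlus
    apply congrArg
    apply Finset.filter_congr
    intro i hi
    rw [Finset.mem_range] at hi
    exact hPosAt i hi
  have hbij : ((Finset.range G.len).filter (fun i => (φ i).2 ≤ 0)).card =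
      (SepF.filter (fun qq => qq.2 ≤ 0)).card := by
    apply Finset.card_bij (fun i _ => φ i)
    · intro i hi
      rw [Finset.mem_filter, Finset.mem_range] at hi
      refine Finset.mem_filter.mpr ⟨hTsub _ ?_, hi.2⟩
      rw [hT]
      exact Finset.mem_image.mpr ⟨i, Finset.mem_range.mpr hi.1, rfl⟩
    · intro i hi j hj hEq
      rw [Finset.mem_filter, Finset.mem_range] at hi hj
      exact hinj i hi.1 j hj.1 hEq
    · intro qq hqq
      rw [Finset.mem_filter] at hqq
      have hqT : qq ∈ T := hSepF_sub_T hqq.1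
      rw [hT] at hqT
      obtain ⟨i, hi, rfl⟩ := Finset.mem_image.mp hqT
      rw [Finset.mem_range] at hi
      refine ⟨i, Finset.mem_filter.mpr ⟨Finset.mem_range.mpr hi, hqq.2⟩, rfl⟩
  have hfcf : SepF.filter (fun qq => qq.2 ≤ 0) = SepCF := by
    ext qq
    rw [Finset.mem_filter, hmemSepF qq, hmemSepCF qq]
    constructor
    · rintro ⟨⟨h1, h2⟩, h3⟩
      split_ifs at h2 with h
      · exact ⟨h1, h, h2⟩
      · exfalso
        have := hz_negcase qq.1 h1 h
        omega
    · rintro ⟨h1, h2, h3, h4⟩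
      exact ⟨⟨h1, by rw [if_pos h2]; exact ⟨h3, h4⟩⟩, h4⟩
  have hfinal : (G.cPlus : ℝ) = C.rho (μ + w μ) := by
    rw [hcPlus, hbij, hfcf]
    exact hcardCF
  exact ⟨hfinal, by rw [hfzero, add_zero]; exact hfinal⟩
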